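/- For every integer r ≥ 2, there exists a proper edge colouring of the graph G_{4r,3(r−1)} which contains no rainbow copy of the cycle C_{4r} on 4r vertices. Consequently, the smallest d for which every proper edge colouring of G_{4r,d} yields a rainbow copy of C_{4r} is at least 3r−2. -/

import Mathlib

open SimpleGraph

/-- A proper edge colouring: edges sharing a vertex receive distinct colours. -/
def IsProperEdgeColoring {V α : Type*} (G : SimpleGraph V) (c : Sym2 V → α) : Prop :=
  ∀ e₁ ∈ G.edgeSet, ∀ e₂ ∈ G.edgeSet, e₁ ≠ e₂ → (∃ v, v ∈ e₁ ∧ v ∈ e₂) → c e₁ ≠ c e₂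

/-- The edge-coloured graph `(G, c)` contains a rainbow copy of `H`. -/
def HasRainbowCopy {V W α : Type*} (G : SimpleGraph V) (c : Sym2 V → α)
    (H : SimpleGraph W) : Prop :=
  ∃ f : W ↪ V, (∀ u v, H.Adj u v → G.Adj (f u) (f v)) ∧
    ∀ u v x y, H.Adj u v → H.Adj x y → s(u, v) ≠ s(x, y) →
      c s(f u, f v) ≠ c s(f x, f y)

/-- Every proper edge colouring of `G` yields a rainbow copy of `H`. -/
def ForcesRainbow {V W : Type*} (G : SimpleGraph V) (H : SimpleGraph W) : Prop :=
  ∀ c : Sym2 V → ℕ, IsProperEdgeColoring G c → HasRainbowCopy G c H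

/-- The maximum degree of `G` is at most `k`. -/
def MaxDegreeLE {V : Type*} (G : SimpleGraph V) (k : ℕ) : Prop :=
  ∀ v, (G.neighborSet v).ncard ≤ k

/-- `k` is the degree anti-Ramsey number of `H`: the smallest `k` for which some
graph with maximum degree at most `k` forces a rainbow copy of `H` under any
proper edge colouring. -/
def DegreeAntiRamsey {W : Type*} (H : SimpleGraph W) (k : ℕ) : Prop :=
  (∃ (n : ℕ) (G : SimpleGraph (Fin n)), MaxDegreeLE G k ∧ ForcesRainbow G H) ∧
  ∀ m : ℕ, (∃ (n : ℕ) (G : SimpleGraph (Fin n)), MaxDegreeLE G m ∧ ForcesRainbow G H) → k ≤ m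

/-- The simple graph generated by symmetrising a relation and removing loops. -/
def graphFromRel {V : Type*} (r : V → V → Prop) : SimpleGraph V where
  Adj a b := a ≠ b ∧ (r a b ∨ r b a)
  symm := ⟨fun a b ⟨hne, h⟩ => ⟨hne.symm, h.symm⟩⟩
  loopless := ⟨fun _ ⟨hne, _⟩ => hne rfl⟩

/-- The graph `G_{2k,d}`: vertices `u_i` (`i : Fin k`) and `v_{i,j}`
(`(i,j) : Fin k × Fin d`), with `v_{i,j}` adjacent to `u_i` and to `u_{i+1 (mod k)}`. -/
def GEven (k d : ℕ) : SimpleGraph (Fin k ⊕ Fin k × Fin d) :=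
  graphFromRel (fun a b =>
    match a, b with
    | Sum.inl a, Sum.inr (i, j) => (a : ℕ) = (i : ℕ) ∨ (a : ℕ) = ((i : ℕ) + 1) % k
    | _, _ => False)

namespace Stmt15Aux

/-- colour of the edge between `u_a` and `v_{i,j}` (numeric version). -/
def ecol (a i j : ℕ) : ℕ :=
  if a = i then 6 * (j / 3) + 3 * (i % 2) + j % 3
  else 6 * (j / 3) + 3 * (i % 2) + (j % 3 + 1) % 3

def F (k d : ℕ) : (Fin k ⊕ Fin k × Fin d) → (Fin k ⊕ Fin k × Fin d) → ℕ
  | Sum.inl a, Sum.inr (i, j) => ecol a i j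
  | Sum.inr (i, j), Sum.inl a => ecol a i j
  | _, _ => 0

lemma F_symm (k d : ℕ) (x y : Fin k ⊕ Fin k × Fin d) : F k d x y = F k d y x := by
  rcases x with a | ⟨i, j⟩ <;> rcases y with b | ⟨i', j'⟩ <;> rfl

def col (k d : ℕ) : Sym2 (Fin k ⊕ Fin k × Fin d) → ℕ :=
  Sym2.lift ⟨fun x y => F k d x y, fun x y => F_symm k d x y⟩

lemma col_eval (k d : ℕ) (a : Fin k) (i : Fin k) (j : Fin d) :
    col k d s(Sum.inl a, Sum.inr (i, j)) = ecol a i j := rfl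

lemma col_eval' (k d : ℕ) (a : Fin k) (i : Fin k) (j : Fin d) :
    col k d s(Sum.inr (i, j), Sum.inl a) = ecol a i j := rfl

lemma succ_mod_ne {k i : ℕ} (hk : 2 ≤ k) (hi : i < k) : (i + 1) % k ≠ i := by
  rcases Nat.lt_or_ge (i + 1) k with h | h
  · rw [Nat.mod_eq_of_lt h]; omega
  · have h1 : i + 1 = k := by omega
    rw [h1, Nat.mod_self]; omega

lemma succ_mod_inj {k i i' : ℕ} (hi : i < k) (hi' : i' < k)
    (h : (i + 1) % k = (i' + 1) % k) : i = i' := by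
  rcases Nat.lt_or_ge (i + 1) k with h1 | h1 <;> rcases Nat.lt_or_ge (i' + 1) k with h2 | h2
  · rw [Nat.mod_eq_of_lt h1, Nat.mod_eq_of_lt h2] at h; omega
  · have : i' + 1 = k := by omega
    rw [Nat.mod_eq_of_lt h1, this, Nat.mod_self] at h; omega
  · have : i + 1 = k := by omega
    rw [this, Nat.mod_self, Nat.mod_eq_of_lt h2] at h; omega
  · omega

/-- every edge of `GEven k d` has the canonical form. -/
lemma edge_form {k d : ℕ} {e : Sym2 (Fin k ⊕ Fin k × Fin d)}
    (he : e ∈ (GEven k d).edgeSet) :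
    ∃ (a i : Fin k) (j : Fin d), e = s(Sum.inl a, Sum.inr (i, j)) ∧
      ((a : ℕ) = (i : ℕ) ∨ (a : ℕ) = ((i : ℕ) + 1) % k) := by
  induction e using Sym2.ind with
  | _ x y =>
    rw [SimpleGraph.mem_edgeSet] at he
    rcases x with a | ⟨i, j⟩ <;> rcases y with b | ⟨i', j'⟩
    · rcases he.2 with h | h <;> exact h.elim
    · exact ⟨a, i', j', rfl, by rcases he.2 with h | h; exact h; exact h.elim⟩
    · refine ⟨b, i, j, Sym2.eq_swap, ?_⟩
      rcases he.2 with h | h; exact h.elim; exact h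
    · rcases he.2 with h | h <;> exact h.elim

lemma proper (k d : ℕ) (hk : 2 ≤ k) (hke : 2 ∣ k) :
    IsProperEdgeColoring (GEven k d) (col k d) := by
  intro e₁ he₁ e₂ he₂ hne hshare
  obtain ⟨a, i, j, rfl, hc⟩ := edge_form he₁
  obtain ⟨a', i', j', rfl, hc'⟩ := edge_form he₂
  obtain ⟨v, hv1, hv2⟩ := hshare
  rw [col_eval, col_eval]
  rw [Sym2.mem_iff] at hv1 hv2
  have hji : (j : ℕ) < d := j.isLt
  have hji' : (j' : ℕ) < d := j'.isLt
  -- shared vertex cases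
  rcases hv1 with rfl | rfl
  · -- v = inl a
    rcases hv2 with hv2 | hv2
    · -- inl a = inl a'
      have haa : a = a' := Sum.inl.inj hv2
      subst haa
      have hpne : (i, j) ≠ (i', j') := by
        intro h
        exact hne (by rw [h])
      rcases hc with h1 | h1 <;> rcases hc' with h2 | h2
      · -- both left
        have hii : i = i' := Fin.ext (by omega)
        subst hii
        have hjj : (j : ℕ) ≠ (j' : ℕ) := by
          intro h
          exact hpne (by rw [Fin.ext h])
        unfold ecol
        rw [if_pos h1, if_pos h2]
        omega
      · -- e₁ left, e₂ right
        have hpar : (i : ℕ) % 2 ≠ (i' : ℕ) % 2 := by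
          have : (i : ℕ) = ((i' : ℕ) + 1) % k := by omega
          rw [this, Nat.mod_mod_of_dvd _ hke]
          omega
        have h2ne : (a : ℕ) ≠ (i' : ℕ) := by
          rw [h2]; exact succ_mod_ne hk i'.isLt
        unfold ecol
        rw [if_pos h1, if_neg h2ne]
        omega
      · -- e₁ right, e₂ left
        have hpar : (i : ℕ) % 2 ≠ (i' : ℕ) % 2 := by
          have : (i' : ℕ) = ((i : ℕ) + 1) % k := by omega
          rw [this, Nat.mod_mod_of_dvd _ hke]
          omega
        have h1ne : (a : ℕ) ≠ (i : ℕ) := by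
          rw [h1]; exact succ_mod_ne hk i.isLt
        unfold ecol
        rw [if_neg h1ne, if_pos h2]
        omega
      · -- both right
        have hii : i = i' := Fin.ext (succ_mod_inj i.isLt i'.isLt (by omega))
        subst hii
        have hjj : (j : ℕ) ≠ (j' : ℕ) := by
          intro h
          exact hpne (by rw [Fin.ext h])
        have h1ne : (a : ℕ) ≠ (i : ℕ) := by
          rw [h1]; exact succ_mod_ne hk i.isLt
        unfold ecol
        rw [if_neg h1ne, if_neg h1ne]
        omega
    · exact absurd hv2 (by simp)
  · -- v = inr (i, j)
    rcases hv2 with hv2 | hv2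
    · exact absurd hv2 (by simp)
    · have hp : i = i' ∧ j = j' := by
        have := Sum.inr.inj hv2
        exact ⟨congrArg Prod.fst this, congrArg Prod.snd this⟩
      obtain ⟨rfl, rfl⟩ := hp
      have haa : (a : ℕ) ≠ (a' : ℕ) := by
        intro h
        exact hne (by rw [Fin.ext h])
      rcases hc with h1 | h1 <;> rcases hc' with h2 | h2
      · omega
      · have h2ne : (a' : ℕ) ≠ (i : ℕ) := by
          rw [h2]; exact succ_mod_ne hk i.isLt
        unfold ecol
        rw [if_pos h1, if_neg h2ne]
        omega
      · have h1ne : (a : ℕ) ≠ (i : ℕ) := by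
          rw [h1]; exact succ_mod_ne hk i.isLt
        unfold ecol
        rw [if_neg h1ne, if_pos h2]
        omega
      · omega


lemma cycle_adj_succ {n : ℕ} (hn : 3 ≤ n) (u v : Fin n) (h : ((u : ℕ) + 1) % n = (v : ℕ)) :
    (cycleGraph n).Adj u v := by
  rw [cycleGraph_adj']
  right
  rw [Fin.sub_def]
  show (n - (u : ℕ) + (v : ℕ)) % n = 1
  have hu : (u : ℕ) < n := u.isLt
  rcases Nat.lt_or_ge ((u : ℕ) + 1) n with h1 | h1
  · have hv : (v : ℕ) = (u : ℕ) + 1 := by rw [← h, Nat.mod_eq_of_lt h1]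
    rw [show n - (u : ℕ) + (v : ℕ) = n + 1 by omega, Nat.add_mod_left]
    exact Nat.mod_eq_of_lt (by omega)
  · have hun : (u : ℕ) + 1 = n := by omega
    have hv : (v : ℕ) = 0 := by rw [← h, hun, Nat.mod_self]
    rw [show n - (u : ℕ) + (v : ℕ) = 1 by omega]
    exact Nat.mod_eq_of_lt (by omega)

lemma two_neighbors {n : ℕ} (hn : 3 ≤ n) (w : Fin n) :
    ∃ x₁ x₂ : Fin n, x₁ ≠ x₂ ∧ (cycleGraph n).Adj w x₁ ∧ (cycleGraph n).Adj w x₂ := by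
  have hw : (w : ℕ) < n := w.isLt
  refine ⟨⟨((w : ℕ) + 1) % n, Nat.mod_lt _ (by omega)⟩,
    ⟨if (w : ℕ) = 0 then n - 1 else (w : ℕ) - 1, by split <;> omega⟩, ?_, ?_, ?_⟩
  · intro hcon
    have := congrArg Fin.val hcon
    simp only at this
    rcases Nat.lt_or_ge ((w : ℕ) + 1) n with h1 | h1
    · rw [Nat.mod_eq_of_lt h1] at this
      split at this <;> omega
    · have hun : (w : ℕ) + 1 = n := by omega
      rw [hun, Nat.mod_self] at this
      split at this <;> omega
  · exact cycle_adj_succ hn _ _ rfl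
  · exact ((cycle_adj_succ hn _ w (by
      show ((if (w : ℕ) = 0 then n - 1 else (w : ℕ) - 1) + 1) % n = (w : ℕ)
      split
      · rw [show n - 1 + 1 = n by omega, Nat.mod_self]; omega
      · rw [Nat.mod_eq_of_lt (by omega)]; omega))).symm

lemma adj_inr {k d : ℕ} {i : Fin k} {j : Fin d} {y : Fin k ⊕ Fin k × Fin d}
    (h : (GEven k d).Adj (Sum.inr (i, j)) y) :
    ∃ a : Fin k, y = Sum.inl a ∧ ((a : ℕ) = (i : ℕ) ∨ (a : ℕ) = ((i : ℕ) + 1) % k) := by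
  rcases y with a | q
  · refine ⟨a, rfl, ?_⟩
    rcases h.2 with h2 | h2
    · exact h2.elim
    · exact h2
  · rcases h.2 with h2 | h2 <;> exact h2.elim

lemma norainbow (r d : ℕ) (hr : 2 ≤ r) (hd : d ≤ 3 * (r - 1)) :
    ¬ HasRainbowCopy (GEven (2 * r) d) (col (2 * r) d) (cycleGraph (4 * r)) := by
  rintro ⟨f, hadj, hrb⟩
  -- for an `inr` vertex of the cycle, both its G-edges are cycle edges
  have getx : ∀ (w : Fin (4 * r)) (i : Fin (2 * r)) (j : Fin d), f w = Sum.inr (i, j) →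
      ∀ t : ℕ, (t = (i : ℕ) ∨ t = ((i : ℕ) + 1) % (2 * r)) →
      ∃ (x : Fin (4 * r)) (b : Fin (2 * r)),
        (cycleGraph (4 * r)).Adj w x ∧ f x = Sum.inl b ∧ (b : ℕ) = t := by
    intro w i j hfw t ht
    obtain ⟨x₁, x₂, hx12, ha1, ha2⟩ := two_neighbors (by omega) w
    obtain ⟨b₁, hb₁, hc₁⟩ := adj_inr (hfw ▸ hadj w x₁ ha1)
    obtain ⟨b₂, hb₂, hc₂⟩ := adj_inr (hfw ▸ hadj w x₂ ha2)
    have hbne : (b₁ : ℕ) ≠ (b₂ : ℕ) := by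
      intro hcon
      exact hx12 (f.injective (by rw [hb₁, hb₂, Fin.ext hcon]))
    have hsn : ((i : ℕ) + 1) % (2 * r) ≠ (i : ℕ) := succ_mod_ne (by omega) i.isLt
    rcases hc₁ with h1 | h1 <;> rcases hc₂ with h2 | h2
    · omega
    · rcases ht with rfl | rfl
      · exact ⟨x₁, b₁, ha1, hb₁, h1⟩
      · exact ⟨x₂, b₂, ha2, hb₂, h2⟩
    · rcases ht with rfl | rfl
      · exact ⟨x₂, b₂, ha2, hb₂, h2⟩
      · exact ⟨x₁, b₁, ha1, hb₁, h1⟩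
    · omega
  -- pigeonhole
  set g : Fin (4 * r) → Fin (2 * r) ⊕ Fin (r - 1) × Fin 2 := fun w =>
    Sum.elim (fun a => Sum.inl a)
      (fun p => Sum.inr (⟨(p.2 : ℕ) / 3, by have := p.2.isLt; omega⟩,
        ⟨(p.1 : ℕ) % 2, by omega⟩)) (f w) with hg
  obtain ⟨w, w', hww, hmap⟩ := Fintype.exists_ne_map_eq_of_card_lt g (by
    simp only [Fintype.card_sum, Fintype.card_prod, Fintype.card_fin]
    omega)
  rcases hfw : f w with a | ⟨i, j⟩ <;> rcases hfw' : f w' with a' | ⟨i', j'⟩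
  · rw [hg] at hmap
    simp only [hfw, hfw', Sum.elim_inl, Sum.inl.injEq] at hmap
    exact hww (f.injective (by rw [hfw, hfw', hmap]))
  · rw [hg] at hmap
    simp only [hfw, hfw', Sum.elim_inl, Sum.elim_inr] at hmap
    exact Sum.inl_ne_inr hmap
  · rw [hg] at hmap
    simp only [hfw, hfw', Sum.elim_inl, Sum.elim_inr] at hmap
    exact Sum.inr_ne_inl hmap
  · rw [hg] at hmap
    simp only [hfw, hfw', Sum.elim_inr, Sum.inr.injEq, Prod.mk.injEq, Fin.mk.injEq] at hmap
    obtain ⟨hj3, hi2⟩ := hmap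
    -- the four relevant cycle edges
    obtain ⟨xa, ba, haxa, hfxa, hba⟩ := getx w i j hfw (i : ℕ) (Or.inl rfl)
    obtain ⟨xb, bb, haxb, hfxb, hbb⟩ := getx w i j hfw (((i : ℕ) + 1) % (2 * r)) (Or.inr rfl)
    obtain ⟨xa', ba', haxa', hfxa', hba'⟩ := getx w' i' j' hfw' (i' : ℕ) (Or.inl rfl)
    obtain ⟨xb', bb', haxb', hfxb', hbb'⟩ := getx w' i' j' hfw' (((i' : ℕ) + 1) % (2 * r)) (Or.inr rfl)
    have hnegen : ∀ (x x' : Fin (4 * r)) (b : Fin (2 * r)), f x' = Sum.inl b →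
        s(w, x) ≠ s(w', x') := by
      intro x x' b hfx' hcon
      rw [Sym2.eq_iff] at hcon
      rcases hcon with ⟨rfl, rfl⟩ | ⟨rfl, rfl⟩
      · exact hww rfl
      · rw [hfw] at hfx'
        exact absurd hfx' (by simp)
    have hbaNe : (ba : ℕ) ≠ (i : ℕ) → False := fun h => h hba
    have hsni : ((i : ℕ) + 1) % (2 * r) ≠ (i : ℕ) := succ_mod_ne (by omega) i.isLt
    have hsni' : ((i' : ℕ) + 1) % (2 * r) ≠ (i' : ℕ) := succ_mod_ne (by omega) i'.isLt
    -- colour of each of the four edges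
    have cLa : col (2 * r) d s(f w, f xa) = 6 * ((j : ℕ) / 3) + 3 * ((i : ℕ) % 2) + (j : ℕ) % 3 := by
      rw [hfw, hfxa, col_eval', ecol, if_pos hba]
    have cRb : col (2 * r) d s(f w, f xb)
        = 6 * ((j : ℕ) / 3) + 3 * ((i : ℕ) % 2) + ((j : ℕ) % 3 + 1) % 3 := by
      rw [hfw, hfxb, col_eval', ecol, if_neg (by rw [hbb]; exact hsni)]
    have cLa' : col (2 * r) d s(f w', f xa')
        = 6 * ((j' : ℕ) / 3) + 3 * ((i' : ℕ) % 2) + (j' : ℕ) % 3 := by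
      rw [hfw', hfxa', col_eval', ecol, if_pos hba']
    have cRb' : col (2 * r) d s(f w', f xb')
        = 6 * ((j' : ℕ) / 3) + 3 * ((i' : ℕ) % 2) + ((j' : ℕ) % 3 + 1) % 3 := by
      rw [hfw', hfxb', col_eval', ecol, if_neg (by rw [hbb']; exact hsni')]
    by_cases h1 : (j : ℕ) % 3 = (j' : ℕ) % 3
    · exact (hrb w xa w' xa' haxa haxa' (hnegen xa xa' ba' hfxa')) (by rw [cLa, cLa']; omega)
    by_cases h2 : ((j : ℕ) % 3 + 1) % 3 = (j' : ℕ) % 3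
    · exact (hrb w xb w' xa' haxb haxa' (hnegen xb xa' ba' hfxa')) (by rw [cRb, cLa']; omega)
    · exact (hrb w xa w' xb' haxa haxb' (hnegen xa xb' bb' hfxb')) (by rw [cLa, cRb']; omega)


end Stmt15Aux

theorem stmt_15 (r : ℕ) (hr : 2 ≤ r) :
    (∃ c : Sym2 (Fin (2 * r) ⊕ Fin (2 * r) × Fin (3 * (r - 1))) → ℕ,
      IsProperEdgeColoring (GEven (2 * r) (3 * (r - 1))) c ∧
      ¬ HasRainbowCopy (GEven (2 * r) (3 * (r - 1))) c
        (SimpleGraph.cycleGraph (4 * r))) ∧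
    ∀ d : ℕ, ForcesRainbow (GEven (2 * r) d) (SimpleGraph.cycleGraph (4 * r)) →
      3 * r - 2 ≤ d := by
  constructor
  · exact ⟨Stmt15Aux.col (2 * r) (3 * (r - 1)),
      Stmt15Aux.proper (2 * r) (3 * (r - 1)) (by omega) ⟨r, rfl⟩,
      Stmt15Aux.norainbow r (3 * (r - 1)) hr le_rfl⟩
  · intro d hforce
    by_contra hlt
    push_neg at hlt
    have hd : d ≤ 3 * (r - 1) := by omega
    exact Stmt15Aux.norainbow r d hr hd
      (hforce _ (Stmt15Aux.proper (2 * r) d (by omega) ⟨r, rfl⟩))
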